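/- If a : Fin N → ℝ is a cyclic orthonormal generator in ℝ^N, then for every n ∈ Fin N the point (C_n, S_n) lies on the unit circle, i.e. C_n² + S_n² = 1. -/

import Mathlib

open Real

theorem cog_CS_on_unit_circle (N : ℕ) (hN : 2 ≤ N) [NeZero N] (a : Fin N → ℝ)
    (ha : ∀ s : Fin N, (∑ j : Fin N, a j * a (j + s)) = if s = 0 then 1 else 0) :
    ∀ n : Fin N,
      (∑ j : Fin N, a j * Real.cos (π / 4 - (2 * π * (n : ℕ) / N) * (j : ℕ))) ^ 2 +
        (∑ j : Fin N, a j * Real.sin (π / 4 - (2 * π * (n : ℕ) / N) * (j : ℕ))) ^ 2 = 1 := by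
  intro n
  have hN0 : (N : ℝ) ≠ 0 := Nat.cast_ne_zero.mpr (NeZero.ne N)
  set α : ℝ := 2 * π * (n : ℕ) / N with hα
  have hαN : α * N = (n : ℕ) * (2 * π) := by
    rw [hα, div_mul_cancel₀ _ hN0]; ring
  have hper : ∀ j s : Fin N,
      Real.cos (α * (((j + s : Fin N) : ℕ) : ℝ) - α * (j : ℕ)) = Real.cos (α * (s : ℕ)) := by
    intro j s
    obtain ⟨m, hm⟩ : ∃ m : ℕ, j.val + s.val = ((j + s : Fin N) : ℕ) + N * m := by
      refine ⟨(j.val + s.val) / N, ?_⟩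
      rw [Fin.add_def]
      exact (Nat.mod_add_div _ _).symm
    have hcast : (((j + s : Fin N) : ℕ) : ℝ) = (j : ℕ) + (s : ℕ) - N * m := by
      have := congrArg (Nat.cast : ℕ → ℝ) hm
      push_cast at this
      linarith
    have harg : α * (((j + s : Fin N) : ℕ) : ℝ) - α * (j : ℕ)
        = α * (s : ℕ) - ((m * n : ℕ) : ℤ) * (2 * π) := by
      rw [hcast]
      push_cast
      have : α * (N : ℝ) * m = (m : ℝ) * ((n : ℕ) * (2 * π)) := by rw [← hαN]; ring
      nlinarith [this]
    rw [harg, Real.cos_sub_int_mul_two_pi]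
  have expand : (∑ j : Fin N, a j * Real.cos (π / 4 - α * (j : ℕ))) ^ 2 +
      (∑ j : Fin N, a j * Real.sin (π / 4 - α * (j : ℕ))) ^ 2
      = ∑ j : Fin N, ∑ k : Fin N, a j * a k * Real.cos (α * (k : ℕ) - α * (j : ℕ)) := by
    rw [sq, sq, Finset.sum_mul_sum, Finset.sum_mul_sum, ← Finset.sum_add_distrib]
    refine Finset.sum_congr rfl fun j _ => ?_
    rw [← Finset.sum_add_distrib]
    refine Finset.sum_congr rfl fun k _ => ?_
    have h : α * (k : ℕ) - α * (j : ℕ) = (π / 4 - α * (j : ℕ)) - (π / 4 - α * (k : ℕ)) := by ring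
    have hcs := Real.cos_sub (π / 4 - α * (j : ℕ)) (π / 4 - α * (k : ℕ))
    rw [h, hcs]
    ring
  rw [expand]
  have reindex : ∀ j : Fin N,
      (∑ k : Fin N, a j * a k * Real.cos (α * (k : ℕ) - α * (j : ℕ)))
      = ∑ s : Fin N, a j * a (j + s) * Real.cos (α * (s : ℕ)) := by
    intro j
    refine (Fintype.sum_equiv (Equiv.addLeft j) _ _ fun s => ?_).symm
    simp only [Equiv.coe_addLeft]
    rw [add_comm j s]
    rw [show ((s + j : Fin N)) = (j + s : Fin N) from add_comm s j, hper j s]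
  simp only [reindex]
  rw [Finset.sum_comm]
  have : ∀ s : Fin N, (∑ j : Fin N, a j * a (j + s) * Real.cos (α * (s : ℕ)))
      = (if s = 0 then 1 else 0) * Real.cos (α * (s : ℕ)) := by
    intro s
    rw [← Finset.sum_mul, ha s]
  simp only [this, ite_mul, one_mul, zero_mul]
  rw [Finset.sum_ite_eq' Finset.univ (0 : Fin N) (fun s : Fin N => Real.cos (α * ((s : ℕ) : ℝ)))]
  simp
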